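/- In C[S_n\S_{α+n}/S_n], for distinct i, j ≤ α, the commutator θ_j·θ_i − θ_i·θ_j equals a((i j))·(θ_j − θ_i), where a((i j)) = (1/n!)·Σ_{σ∈S_n} δ_{(i j)·σ}. -/

import Mathlib

open Equiv

noncomputable section

/-- The subgroup `S_n ⊆ S_{α+n}` of permutations fixing `{1,…,α}` pointwise. -/
def fixFirst (α n : ℕ) : Subgroup (Perm (Fin (α + n))) :=
  fixingSubgroup (Perm (Fin (α + n))) {i : Fin (α + n) | (i : ℕ) < α}

/-- The double coset `S_n · t · S_n` in `S_{α+n}`, as a finset. -/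
def dcos (α n : ℕ) (t : Perm (Fin (α + n))) : Finset (Perm (Fin (α + n))) :=
  (Set.toFinite {h | ∃ k₁ ∈ fixFirst α n, ∃ k₂ ∈ fixFirst α n, h = k₁ * t * k₂}).toFinset

/-- `(1/n!)·Σ_{h ∈ S_n t S_n} δ_h` in the group algebra `C[S_{α+n}]`. -/
def dosetElt (α n : ℕ) (t : Perm (Fin (α + n))) : MonoidAlgebra ℂ (Perm (Fin (α + n))) :=
  ((Nat.factorial n : ℂ))⁻¹ • ∑ h ∈ dcos α n t, MonoidAlgebra.single h 1

/-- `θ_i = (1/n!)·Σ_{h ∈ S_n (i,α+1) S_n} δ_h`, where `(i, α+1)` is the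
transposition of `i ≤ α` with `α+1` (0-based: of `i < α` with `α`). -/
def theta (α n : ℕ) (hn : 0 < n) (i : Fin α) : MonoidAlgebra ℂ (Perm (Fin (α + n))) :=
  dosetElt α n (Equiv.swap (Fin.castAdd n i) ⟨α, by omega⟩)

/-- `a(g) = (1/n!)·Σ_{σ ∈ S_n} δ_{gσ}` for `g ∈ S_α ⊆ S_{α+n}`. -/
def aElt (α n : ℕ) (g : Perm (Fin α)) : MonoidAlgebra ℂ (Perm (Fin (α + n))) :=
  ((Nat.factorial n : ℂ))⁻¹ • ∑ σ ∈ (Set.toFinite (fixFirst α n : Set (Perm (Fin (α + n))))).toFinset,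
    MonoidAlgebra.single (Perm.viaFintypeEmbedding g (Fin.castAddEmb n) * σ) 1

/-- The unit `(1/n!)·Σ_{k ∈ S_n} δ_k` of the double coset algebra. -/
def unitK (α n : ℕ) : MonoidAlgebra ℂ (Perm (Fin (α + n))) :=
  ((Nat.factorial n : ℂ))⁻¹ • ∑ σ ∈ (Set.toFinite (fixFirst α n : Set (Perm (Fin (α + n))))).toFinset,
    MonoidAlgebra.single σ 1

end

noncomputable section TCsec
open Finset MonoidAlgebra

namespace TC

/-! ### Cardinality helpers -/

lemma card_compl_lt (N m : ℕ) (hm : m ≤ N) :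
    Fintype.card {x : Fin N // ¬ ((x : ℕ) < m)} = N - m := by
  have e : {x : Fin N // ¬ ((x : ℕ) < m)} ≃ Fin (N - m) :=
    { toFun := fun x => ⟨(x.1 : ℕ) - m, by have := x.1.isLt; have := x.2; omega⟩
      invFun := fun y => ⟨⟨(y : ℕ) + m, by have := y.isLt; omega⟩, by simp⟩
      left_inv := fun x => by
        have := x.2
        ext
        simp only [Fin.val_mk]
        omega
      right_inv := fun y => by
        ext
        simp only [Fin.val_mk]
        omega }
  rw [Fintype.card_congr e, Fintype.card_fin]

lemma card_fixsub (N m : ℕ) (hm : m ≤ N) :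
    Fintype.card {f : Perm (Fin N) // ∀ x : Fin N, (x : ℕ) < m → f x = x}
      = (N - m).factorial := by
  classical
  have e1 : {f : Perm (Fin N) // ∀ x : Fin N, (x : ℕ) < m → f x = x}
      ≃ {f : Perm (Fin N) // ∀ x : Fin N, ¬ ¬ ((x:ℕ) < m) → f x = x} :=
    Equiv.subtypeEquivRight (fun f => by
      constructor
      · intro h x hx; exact h x (not_not.mp hx)
      · intro h x hx; exact h x (not_not.mpr hx))
  have e2 := (Equiv.Perm.subtypeEquivSubtypePerm (fun x : Fin N => ¬ ((x:ℕ) < m))).symm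
  rw [Fintype.card_congr (e1.trans e2), Fintype.card_perm, card_compl_lt N m hm]

lemma card_of_fixdesc {N : ℕ} (F : Finset (Perm (Fin N))) (m : ℕ) (hm : m ≤ N)
    (h : ∀ k, k ∈ F ↔ ∀ x : Fin N, (x : ℕ) < m → k x = x) :
    F.card = (N - m).factorial := by
  classical
  rw [← Fintype.card_coe]
  exact (Fintype.card_congr (Equiv.subtypeEquivRight h)).trans (card_fixsub N m hm)

/-! ### The finset `Fk` -/

variable {α n : ℕ}

def Fk (α n : ℕ) : Finset (Perm (Fin (α + n))) :=
  (Set.toFinite (fixFirst α n : Set (Perm (Fin (α + n))))).toFinset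

lemma mem_Fk {k : Perm (Fin (α + n))} :
    k ∈ Fk α n ↔ ∀ x : Fin (α + n), (x : ℕ) < α → k x = x := by
  rw [Fk, Set.Finite.mem_toFinset]
  constructor
  · intro h x hx
    exact (mem_fixingSubgroup_iff _).mp h x hx
  · intro h
    exact (mem_fixingSubgroup_iff _).mpr fun y hy => h y hy

lemma card_Fk : (Fk α n).card = n.factorial := by
  have := card_of_fixdesc (Fk α n) α (Nat.le_add_right _ _) (fun k => mem_Fk)
  simpa using this

lemma one_mem_Fk : (1 : Perm (Fin (α + n))) ∈ Fk α n := by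
  rw [mem_Fk]; intro x _; rfl

lemma mul_mem_Fk {a b : Perm (Fin (α + n))} (ha : a ∈ Fk α n) (hb : b ∈ Fk α n) :
    a * b ∈ Fk α n := by
  rw [mem_Fk] at *
  intro x hx
  rw [Perm.mul_apply, hb x hx, ha x hx]

lemma inv_mem_Fk {a : Perm (Fin (α + n))} (ha : a ∈ Fk α n) : a⁻¹ ∈ Fk α n := by
  rw [mem_Fk] at *
  intro x hx
  have := ha x hx
  apply a.injective
  rw [← Perm.mul_apply, mul_inv_cancel, Perm.one_apply, this]

lemma unitK_eq : unitK α n = ((n.factorial : ℂ))⁻¹ • ∑ σ ∈ Fk α n, single σ (1:ℂ) := rfl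

/-! ### Basic perm facts -/

lemma apply_ge {k : Perm (Fin (α + n))} (hk : k ∈ Fk α n) {x : Fin (α + n)}
    (hx : α ≤ (x : ℕ)) : α ≤ (k x : ℕ) := by
  by_contra h
  push_neg at h
  have h2 : k (k x) = k x := (mem_Fk.mp hk) _ h
  have := k.injective h2
  rw [← this] at h
  omega

lemma comm_of_fixed {k : Perm (Fin (α + n))} {x y : Fin (α + n)}
    (hx : k x = x) (hy : k y = y) : k * Equiv.swap x y = Equiv.swap x y * k := by
  have h := Equiv.swap_apply_apply k x y
  rw [hx, hy] at h
  conv_rhs => rw [h, inv_mul_cancel_right]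

/-! ### Absorption -/

lemma KS_mul_single {a : Perm (Fin (α + n))} (ha : a ∈ Fk α n) :
    (∑ σ ∈ Fk α n, single σ (1:ℂ)) * single a 1 = ∑ σ ∈ Fk α n, single σ (1:ℂ) := by
  rw [Finset.sum_mul]
  simp only [MonoidAlgebra.single_mul_single, mul_one]
  exact Finset.sum_equiv (Equiv.mulRight a)
    (fun s => ⟨fun hs => mul_mem_Fk hs ha,
      fun hs => by simpa using mul_mem_Fk hs (inv_mem_Fk ha)⟩)
    (fun s _ => rfl)

lemma single_mul_KS {a : Perm (Fin (α + n))} (ha : a ∈ Fk α n) :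
    single a (1:ℂ) * (∑ σ ∈ Fk α n, single σ (1:ℂ)) = ∑ σ ∈ Fk α n, single σ (1:ℂ) := by
  rw [Finset.mul_sum]
  simp only [MonoidAlgebra.single_mul_single, one_mul]
  exact Finset.sum_equiv (Equiv.mulLeft a)
    (fun s => ⟨fun hs => mul_mem_Fk ha hs,
      fun hs => by simpa using mul_mem_Fk (inv_mem_Fk ha) hs⟩)
    (fun s _ => rfl)

/-! ### unitK algebra -/

lemma unitK_mul_single {a : Perm (Fin (α + n))} (ha : a ∈ Fk α n) :
    unitK α n * single a (1:ℂ) = unitK α n := by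
  rw [unitK_eq, smul_mul_assoc, KS_mul_single ha]

lemma single_mul_unitK {a : Perm (Fin (α + n))} (ha : a ∈ Fk α n) :
    single a (1:ℂ) * unitK α n = unitK α n := by
  rw [unitK_eq, mul_smul_comm, single_mul_KS ha]

lemma unitK_mul_unitK : unitK α n * unitK α n = unitK α n := by
  nth_rewrite 1 [unitK_eq]
  rw [smul_mul_assoc, Finset.sum_mul]
  have : ∀ σ ∈ Fk α n, single σ (1:ℂ) * unitK α n = unitK α n :=
    fun σ hσ => single_mul_unitK hσ
  rw [Finset.sum_congr rfl this, Finset.sum_const, card_Fk,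
    ← Nat.cast_smul_eq_nsmul ℂ, smul_smul,
    inv_mul_cancel₀ (by exact_mod_cast n.factorial_ne_zero), one_smul]

def P (α n : ℕ) (h : Perm (Fin (α + n))) : MonoidAlgebra ℂ (Perm (Fin (α + n))) :=
  unitK α n * single h 1 * unitK α n

lemma P_congr {a b h : Perm (Fin (α + n))} (ha : a ∈ Fk α n) (hb : b ∈ Fk α n) :
    P α n (a * h * b) = P α n h := by
  unfold P
  have : single (a * h * b) (1:ℂ) = single a 1 * single h 1 * single b 1 := by
    simp [MonoidAlgebra.single_mul_single]
  rw [this]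
  simp only [mul_assoc]
  rw [single_mul_unitK hb]
  simp only [← mul_assoc]
  rw [unitK_mul_single ha]

/-! ### Counting -/

lemma card_stab (hn : 0 < n) {a0 : Fin (α + n)} (ha0 : (a0 : ℕ) = α) :
    ((Fk α n).filter (fun u => u a0 = a0)).card = (n - 1).factorial := by
  classical
  have h := card_of_fixdesc ((Fk α n).filter (fun u => u a0 = a0)) (α + 1)
    (by omega) (fun k => by
      rw [Finset.mem_filter, mem_Fk]
      constructor
      · rintro ⟨h1, h2⟩ x hx
        rcases lt_or_ge (x : ℕ) α with h | h
        · exact h1 x h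
        · have : x = a0 := Fin.ext (by omega)
          rw [this, h2]
      · intro h
        refine ⟨fun x hx => h x (by omega), h a0 (by omega)⟩)
  rw [h]
  congr 1
  omega

lemma image_eq_dcos (t : Perm (Fin (α + n))) :
    ((Fk α n ×ˢ Fk α n).image (fun p => p.1 * t * p.2)) = dcos α n t := by
  ext h
  rw [Finset.mem_image, dcos, Set.Finite.mem_toFinset]
  constructor
  · rintro ⟨⟨k1, k2⟩, hp, rfl⟩
    rw [Finset.mem_product] at hp
    exact ⟨k1, by simpa [Fk, Set.Finite.mem_toFinset] using hp.1,
      k2, by simpa [Fk, Set.Finite.mem_toFinset] using hp.2, rfl⟩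
  · rintro ⟨k1, h1, k2, h2, rfl⟩
    exact ⟨(k1, k2), Finset.mem_product.mpr
      ⟨by simpa [Fk, Set.Finite.mem_toFinset] using h1,
       by simpa [Fk, Set.Finite.mem_toFinset] using h2⟩, rfl⟩

lemma fiber_card {a0 c : Fin (α + n)} (ha0 : (a0 : ℕ) = α) (hc : (c : ℕ) < α)
    {h : Perm (Fin (α + n))} (hh : h ∈ dcos α n (Equiv.swap c a0)) :
    ((Fk α n ×ˢ Fk α n).filter (fun p => p.1 * Equiv.swap c a0 * p.2 = h)).card
      = ((Fk α n).filter (fun u => u a0 = a0)).card := by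
  classical
  set t := Equiv.swap c a0 with ht
  rw [dcos, Set.Finite.mem_toFinset] at hh
  obtain ⟨a, haK, b, hbK, rfl⟩ := hh
  have ha : a ∈ Fk α n := by simpa [Fk, Set.Finite.mem_toFinset] using haK
  have hb : b ∈ Fk α n := by simpa [Fk, Set.Finite.mem_toFinset] using hbK
  -- commuting lemma for elements of the stabilizer
  have comm : ∀ u : Perm (Fin (α + n)), u ∈ Fk α n → u a0 = a0 → u * t = t * u := by
    intro u hu hu0
    exact comm_of_fixed (mem_Fk.mp hu c hc) hu0
  apply Finset.card_bij' (fun p _ => a⁻¹ * p.1) (fun u _ => (a * u, u⁻¹ * b))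
  · -- forward maps into target
    rintro ⟨k1, k2⟩ hp
    rw [Finset.mem_filter, Finset.mem_product] at hp
    obtain ⟨⟨h1, h2⟩, heq⟩ := hp
    have huK : a⁻¹ * k1 ∈ Fk α n := mul_mem_Fk (inv_mem_Fk ha) h1
    rw [Finset.mem_filter]
    refine ⟨huK, ?_⟩
    -- a⁻¹ * k1 = t * (b * k2⁻¹) * t⁻¹
    have hv : a⁻¹ * k1 = t * (b * k2⁻¹) * t⁻¹ := by
      calc a⁻¹ * k1 = a⁻¹ * (k1 * t * k2) * k2⁻¹ * t⁻¹ := by group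
        _ = a⁻¹ * (a * t * b) * k2⁻¹ * t⁻¹ := by rw [heq]
        _ = t * (b * k2⁻¹) * t⁻¹ := by group
    rw [hv]
    simp only [Perm.mul_apply]
    rw [show t⁻¹ = t from by rw [ht, Equiv.swap_inv]]
    rw [show t a0 = c from by rw [ht, Equiv.swap_apply_right]]
    rw [mem_Fk.mp (inv_mem_Fk h2) c hc, mem_Fk.mp hb c hc, ht, Equiv.swap_apply_left]
  · -- backward maps into source
    intro u hu
    rw [Finset.mem_filter] at hu
    obtain ⟨huK, hu0⟩ := hu
    rw [Finset.mem_filter, Finset.mem_product]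
    refine ⟨⟨mul_mem_Fk ha huK, mul_mem_Fk (inv_mem_Fk huK) hb⟩, ?_⟩
    have hcomm := comm u huK hu0
    calc a * u * t * (u⁻¹ * b) = a * (u * t * u⁻¹) * b := by group
      _ = a * (t * u * u⁻¹) * b := by rw [hcomm]
      _ = a * t * b := by group
  · -- left inverse
    rintro ⟨k1, k2⟩ hp
    rw [Finset.mem_filter, Finset.mem_product] at hp
    obtain ⟨⟨h1, h2⟩, heq⟩ := hp
    have huK : a⁻¹ * k1 ∈ Fk α n := mul_mem_Fk (inv_mem_Fk ha) h1
    have hu0 : (a⁻¹ * k1) a0 = a0 := by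
      have hv : a⁻¹ * k1 = t * (b * k2⁻¹) * t⁻¹ := by
        calc a⁻¹ * k1 = a⁻¹ * (k1 * t * k2) * k2⁻¹ * t⁻¹ := by group
          _ = a⁻¹ * (a * t * b) * k2⁻¹ * t⁻¹ := by rw [heq]
          _ = t * (b * k2⁻¹) * t⁻¹ := by group
      rw [hv]
      simp only [Perm.mul_apply]
      rw [show t⁻¹ = t from by rw [ht, Equiv.swap_inv]]
      rw [show t a0 = c from by rw [ht, Equiv.swap_apply_right]]
      rw [mem_Fk.mp (inv_mem_Fk h2) c hc, mem_Fk.mp hb c hc, ht, Equiv.swap_apply_left]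
    have hcomm := comm _ huK hu0
    ext : 1
    · simp [mul_assoc]
    · -- k2 component : (a⁻¹*k1)⁻¹ * b = k2
      show (a⁻¹ * k1)⁻¹ * b = k2
      have h3 : t * k2 = (a⁻¹ * k1)⁻¹ * t * b := by
        calc t * k2 = k1⁻¹ * (k1 * t * k2) := by group
          _ = k1⁻¹ * (a * t * b) := by rw [heq]
          _ = (a⁻¹ * k1)⁻¹ * t * b := by group
      have h4 : (a⁻¹ * k1)⁻¹ * t = t * (a⁻¹ * k1)⁻¹ :=
        comm _ (inv_mem_Fk huK)
          (by nth_rewrite 1 [← hu0]; exact Equiv.symm_apply_apply _ _)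
      rw [h4, mul_assoc] at h3
      exact (mul_left_cancel h3).symm
  · -- right inverse
    intro u hu
    simp [mul_assoc]

/-! ### theta as a sandwich -/

lemma KS_mul_single_mul_KS (t : Perm (Fin (α + n))) :
    (∑ σ ∈ Fk α n, single σ (1:ℂ)) * single t 1 * (∑ σ ∈ Fk α n, single σ (1:ℂ))
      = ∑ p ∈ Fk α n ×ˢ Fk α n, single (p.1 * t * p.2) (1:ℂ) := by
  rw [Finset.sum_mul, Finset.sum_mul, Finset.sum_product]
  apply Finset.sum_congr rfl
  intro k1 _
  rw [Finset.mul_sum]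
  apply Finset.sum_congr rfl
  intro k2 _
  simp [MonoidAlgebra.single_mul_single]

lemma theta_eq (hn : 0 < n) (i : Fin α) :
    theta α n hn i
      = (n : ℂ) • P α n (Equiv.swap (Fin.castAdd n i) ⟨α, by omega⟩) := by
  classical
  set a0 : Fin (α + n) := ⟨α, by omega⟩ with ha0def
  set c : Fin (α + n) := Fin.castAdd n i with hcdef
  have hc : (c : ℕ) < α := by simp [hcdef]
  set t := Equiv.swap c a0 with htdef
  have key : (∑ p ∈ Fk α n ×ˢ Fk α n, single (p.1 * t * p.2) (1:ℂ))
      = (n-1).factorial • ∑ h ∈ dcos α n t, single h (1:ℂ) := by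
    have hcomp := Finset.sum_comp (s := Fk α n ×ˢ Fk α n)
      (fun h : Perm (Fin (α + n)) => single h (1:ℂ))
      (fun p : Perm (Fin (α + n)) × Perm (Fin (α + n)) => p.1 * t * p.2)
    rw [image_eq_dcos] at hcomp
    rw [hcomp, Finset.smul_sum]
    apply Finset.sum_congr rfl
    intro h hh
    rw [fiber_card (by rfl) hc hh, card_stab hn (by rfl)]
  have expand : P α n t
      = ((n.factorial : ℂ))⁻¹ • (((n.factorial : ℂ))⁻¹
          • ∑ p ∈ Fk α n ×ˢ Fk α n, single (p.1 * t * p.2) (1:ℂ)) := by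
    rw [P, unitK_eq, smul_mul_assoc, smul_mul_assoc, mul_smul_comm,
      KS_mul_single_mul_KS]
  have hne : ((n.factorial : ℂ)) ≠ 0 := by exact_mod_cast n.factorial_ne_zero
  have hfac : ((n.factorial : ℂ)) = (n : ℂ) * ((n-1).factorial : ℂ) := by
    exact_mod_cast (Nat.mul_factorial_pred hn.ne').symm
  rw [expand, key, ← Nat.cast_smul_eq_nsmul ℂ, smul_smul, smul_smul, smul_smul]
  show theta α n hn i = _ • _
  rw [theta, dosetElt]
  congr 1
  rw [hfac]
  have hne2 : ((n-1).factorial : ℂ) ≠ 0 := by exact_mod_cast (n-1).factorial_ne_zero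
  have hne3 : (n : ℂ) ≠ 0 := by exact_mod_cast hn.ne'
  field_simp

/-! ### product of sandwiches -/

lemma sandwich_mul_sandwich (x y : MonoidAlgebra ℂ (Perm (Fin (α + n)))) :
    (unitK α n * x * unitK α n) * (unitK α n * y * unitK α n)
      = unitK α n * (x * unitK α n * y) * unitK α n := by
  calc (unitK α n * x * unitK α n) * (unitK α n * y * unitK α n)
      = unitK α n * x * (unitK α n * unitK α n) * y * unitK α n := by
        simp only [mul_assoc]
    _ = unitK α n * (x * unitK α n * y) * unitK α n := by
        rw [unitK_mul_unitK]
        simp only [mul_assoc]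

lemma middle_expand (t s : Perm (Fin (α + n))) :
    single t (1:ℂ) * unitK α n * single s 1
      = ((n.factorial : ℂ))⁻¹ • ∑ k ∈ Fk α n, single (t * k * s) (1:ℂ) := by
  rw [unitK_eq, mul_smul_comm, smul_mul_assoc]
  congr 1
  rw [Finset.mul_sum, Finset.sum_mul]
  apply Finset.sum_congr rfl
  intro k _
  simp [MonoidAlgebra.single_mul_single]

lemma P_mul_P (t s : Perm (Fin (α + n))) :
    P α n t * P α n s = ((n.factorial : ℂ))⁻¹ • ∑ k ∈ Fk α n, P α n (t * k * s) := by
  unfold P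
  rw [sandwich_mul_sandwich, middle_expand, mul_smul_comm, smul_mul_assoc]
  congr 1
  rw [Finset.mul_sum, Finset.sum_mul]

/-! ### the off-diagonal terms -/

lemma P_offdiag {a0 a1 : Fin (α + n)} (ha0 : (a0 : ℕ) = α) (ha1 : (a1 : ℕ) = α + 1)
    {i j : Fin α} (hij : i ≠ j) {k : Perm (Fin (α + n))} (hk : k ∈ Fk α n)
    (hk0 : k a0 ≠ a0) :
    P α n (Equiv.swap (Fin.castAdd n j) a0 * k * Equiv.swap (Fin.castAdd n i) a0)
      = P α n (Equiv.swap (Fin.castAdd n i) a0 * Equiv.swap (Fin.castAdd n j) a1) := by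
  classical
  set ci : Fin (α + n) := Fin.castAdd n i with hci
  set cj : Fin (α + n) := Fin.castAdd n j with hcj
  have hcival : (ci : ℕ) = (i : ℕ) := rfl
  have hcjval : (cj : ℕ) = (j : ℕ) := rfl
  have hciα : (ci : ℕ) < α := i.isLt
  have hcjα : (cj : ℕ) < α := j.isLt
  have hcicj : ci ≠ cj := fun h => hij (Fin.ext (by
    have := congrArg (Fin.val) h; simpa [hci, hcj] using this))
  have hcia0 : ci ≠ a0 := fun h => by
    have := congrArg (Fin.val) h; omega
  have hcja0 : cj ≠ a0 := fun h => by
    have := congrArg (Fin.val) h; omega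
  have hcia1 : ci ≠ a1 := fun h => by
    have := congrArg (Fin.val) h; omega
  have hcja1 : cj ≠ a1 := fun h => by
    have := congrArg (Fin.val) h; omega
  have ha0a1 : a0 ≠ a1 := fun h => by
    have := congrArg (Fin.val) h; omega
  set q : Fin (α + n) := k⁻¹ a0 with hq
  have hkq : k q = a0 := by rw [hq, ← Perm.mul_apply, mul_inv_cancel, Perm.one_apply]
  have hqge : α ≤ (q : ℕ) := by
    by_contra h
    push_neg at h
    have := mem_Fk.mp hk q h
    rw [this] at hkq
    omega
  have hqa0 : q ≠ a0 := by
    intro h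
    rw [h] at hkq
    exact hk0 hkq
  have hqval : α + 1 ≤ (q : ℕ) := by
    rcases eq_or_lt_of_le hqge with h | h
    · exact absurd (Fin.ext (by omega)) (Ne.symm hqa0)
    · omega
  have hqci : q ≠ ci := fun h => by
    have := congrArg (Fin.val) h; omega
  have hqcj : q ≠ cj := fun h => by
    have := congrArg (Fin.val) h; omega
  have hbF : Equiv.swap a1 q ∈ Fk α n := by
    rw [mem_Fk]
    intro x hx
    exact Equiv.swap_apply_of_ne_of_ne
      (fun h => by have := congrArg (Fin.val) h; omega)
      (fun h => by have := congrArg (Fin.val) h; omega)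
  have haF : Equiv.swap cj a0 * k * Equiv.swap ci a0 * Equiv.swap a1 q
      * (Equiv.swap cj a1 * Equiv.swap ci a0) ∈ Fk α n := by
    rw [mem_Fk]
    intro x hx
    simp only [Perm.mul_apply]
    by_cases h1 : x = ci
    · subst h1
      rw [Equiv.swap_apply_left,
        Equiv.swap_apply_of_ne_of_ne (Ne.symm hcja0) ha0a1,
        Equiv.swap_apply_of_ne_of_ne ha0a1 (Ne.symm hqa0),
        Equiv.swap_apply_right,
        mem_Fk.mp hk ci hciα,
        Equiv.swap_apply_of_ne_of_ne hcicj hcia0]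
    · by_cases h2 : x = cj
      · subst h2
        rw [Equiv.swap_apply_of_ne_of_ne hcicj.symm hcja0,
          Equiv.swap_apply_left,
          Equiv.swap_apply_left,
          Equiv.swap_apply_of_ne_of_ne hqci hqa0,
          hkq,
          Equiv.swap_apply_right]
      · have hxci : x ≠ ci := h1
        have hxcj : x ≠ cj := h2
        have hxa0 : x ≠ a0 := fun h => by have := congrArg (Fin.val) h; omega
        have hxa1 : x ≠ a1 := fun h => by have := congrArg (Fin.val) h; omega
        have hxq : x ≠ q := fun h => by have := congrArg (Fin.val) h; omega
        rw [Equiv.swap_apply_of_ne_of_ne hxci hxa0,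
          Equiv.swap_apply_of_ne_of_ne hxcj hxa1,
          Equiv.swap_apply_of_ne_of_ne hxa1 hxq,
          Equiv.swap_apply_of_ne_of_ne hxci hxa0,
          mem_Fk.mp hk x hx,
          Equiv.swap_apply_of_ne_of_ne hxcj hxa0]
  have hteq : Equiv.swap cj a0 * k * Equiv.swap ci a0
      = (Equiv.swap cj a0 * k * Equiv.swap ci a0 * Equiv.swap a1 q
          * (Equiv.swap cj a1 * Equiv.swap ci a0))
        * (Equiv.swap ci a0 * Equiv.swap cj a1)
        * (Equiv.swap a1 q)⁻¹ := by
    rw [Equiv.swap_inv]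
    simp only [mul_assoc]
    rw [Equiv.swap_mul_self_mul, Equiv.swap_mul_self_mul, Equiv.swap_mul_self, mul_one]
  rw [hteq, P_congr haF (inv_mem_Fk hbF)]

lemma P_offdiag_symm {a0 a1 : Fin (α + n)} (ha0 : (a0 : ℕ) = α) (ha1 : (a1 : ℕ) = α + 1)
    {i j : Fin α} (hij : i ≠ j) :
    P α n (Equiv.swap (Fin.castAdd n i) a0 * Equiv.swap (Fin.castAdd n j) a1)
      = P α n (Equiv.swap (Fin.castAdd n j) a0 * Equiv.swap (Fin.castAdd n i) a1) := by
  classical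
  set ci : Fin (α + n) := Fin.castAdd n i with hci
  set cj : Fin (α + n) := Fin.castAdd n j with hcj
  have hciα : (ci : ℕ) < α := i.isLt
  have hcjα : (cj : ℕ) < α := j.isLt
  have hcicj : ci ≠ cj := fun h => hij (Fin.ext (by
    have := congrArg (Fin.val) h; simpa [hci, hcj] using this))
  have hcia0 : ci ≠ a0 := fun h => by have := congrArg (Fin.val) h; omega
  have hcja0 : cj ≠ a0 := fun h => by have := congrArg (Fin.val) h; omega
  have hcia1 : ci ≠ a1 := fun h => by have := congrArg (Fin.val) h; omega
  have hcja1 : cj ≠ a1 := fun h => by have := congrArg (Fin.val) h; omega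
  have ha0a1 : a0 ≠ a1 := fun h => by have := congrArg (Fin.val) h; omega
  have hdF : Equiv.swap a0 a1 ∈ Fk α n := by
    rw [mem_Fk]
    intro x hx
    exact Equiv.swap_apply_of_ne_of_ne
      (fun h => by have := congrArg (Fin.val) h; omega)
      (fun h => by have := congrArg (Fin.val) h; omega)
  have hperm : Equiv.swap a0 a1 * (Equiv.swap ci a0 * Equiv.swap cj a1) * Equiv.swap a0 a1
      = Equiv.swap cj a0 * Equiv.swap ci a1 := by
    ext x
    simp only [Perm.mul_apply]
    by_cases h1 : x = ci
    · subst h1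
      rw [Equiv.swap_apply_of_ne_of_ne hcia0 hcia1,
        Equiv.swap_apply_of_ne_of_ne hcicj hcia1,
        Equiv.swap_apply_left,
        Equiv.swap_apply_left,
        Equiv.swap_apply_left,
        Equiv.swap_apply_of_ne_of_ne (Ne.symm hcja1) (Ne.symm ha0a1)]
    · by_cases h2 : x = cj
      · subst h2
        rw [Equiv.swap_apply_of_ne_of_ne hcja0 hcja1,
          Equiv.swap_apply_left,
          Equiv.swap_apply_of_ne_of_ne (Ne.symm hcia1) (Ne.symm ha0a1),
          Equiv.swap_apply_right,
          Equiv.swap_apply_of_ne_of_ne hcicj.symm hcja1,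
          Equiv.swap_apply_left]
      · by_cases h3 : x = a0
        · subst h3
          rw [Equiv.swap_apply_left,
            Equiv.swap_apply_right,
            Equiv.swap_apply_of_ne_of_ne hcicj.symm hcja0,
            Equiv.swap_apply_of_ne_of_ne hcja0 hcja1,
            Equiv.swap_apply_of_ne_of_ne (Ne.symm hcia0) ha0a1,
            Equiv.swap_apply_right]
        · by_cases h4 : x = a1
          · subst h4
            rw [Equiv.swap_apply_right,
              Equiv.swap_apply_of_ne_of_ne (Ne.symm hcja0) ha0a1,
              Equiv.swap_apply_right,
              Equiv.swap_apply_of_ne_of_ne hcia0 hcia1,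
              Equiv.swap_apply_right,
              Equiv.swap_apply_of_ne_of_ne hcicj hcia0]
          · rw [Equiv.swap_apply_of_ne_of_ne h3 h4,
              Equiv.swap_apply_of_ne_of_ne h2 h4,
              Equiv.swap_apply_of_ne_of_ne h1 h3,
              Equiv.swap_apply_of_ne_of_ne h3 h4,
              Equiv.swap_apply_of_ne_of_ne h1 h4,
              Equiv.swap_apply_of_ne_of_ne h2 h3]
  rw [← hperm, P_congr hdF hdF]

lemma P_diag {a0 : Fin (α + n)} {i j : Fin α} {k : Perm (Fin (α + n))}
    (hk : k ∈ Fk α n) (hk0 : k a0 = a0) :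
    P α n (Equiv.swap (Fin.castAdd n j) a0 * k * Equiv.swap (Fin.castAdd n i) a0)
      = P α n (Equiv.swap (Fin.castAdd n j) a0 * Equiv.swap (Fin.castAdd n i) a0) := by
  have hcomm : k * Equiv.swap (Fin.castAdd n i) a0 = Equiv.swap (Fin.castAdd n i) a0 * k :=
    comm_of_fixed (mem_Fk.mp hk _ i.isLt) hk0
  have hre : Equiv.swap (Fin.castAdd n j) a0 * k * Equiv.swap (Fin.castAdd n i) a0
      = 1 * (Equiv.swap (Fin.castAdd n j) a0 * Equiv.swap (Fin.castAdd n i) a0) * k := by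
    rw [one_mul, mul_assoc, mul_assoc, hcomm]
  rw [hre, P_congr one_mem_Fk hk]

lemma sum_cancel (hn : 0 < n) {a0 : Fin (α + n)} (ha0 : (a0 : ℕ) = α)
    {i j : Fin α} (hij : i ≠ j) :
    ∑ k ∈ Fk α n, P α n (Equiv.swap (Fin.castAdd n j) a0 * k * Equiv.swap (Fin.castAdd n i) a0)
      - ∑ k ∈ Fk α n, P α n (Equiv.swap (Fin.castAdd n i) a0 * k * Equiv.swap (Fin.castAdd n j) a0)
    = ((n-1).factorial : ℂ) •
        (P α n (Equiv.swap (Fin.castAdd n j) a0 * Equiv.swap (Fin.castAdd n i) a0)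
          - P α n (Equiv.swap (Fin.castAdd n i) a0 * Equiv.swap (Fin.castAdd n j) a0)) := by
  classical
  have split1 := (Finset.sum_filter_add_sum_filter_not (Fk α n) (fun k => k a0 = a0)
    (fun k => P α n (Equiv.swap (Fin.castAdd n j) a0 * k * Equiv.swap (Fin.castAdd n i) a0))).symm
  have split2 := (Finset.sum_filter_add_sum_filter_not (Fk α n) (fun k => k a0 = a0)
    (fun k => P α n (Equiv.swap (Fin.castAdd n i) a0 * k * Equiv.swap (Fin.castAdd n j) a0))).symm
  rw [split1, split2]
  -- diagonal parts
  have diag1 : ∑ k ∈ (Fk α n).filter (fun k => k a0 = a0),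
      P α n (Equiv.swap (Fin.castAdd n j) a0 * k * Equiv.swap (Fin.castAdd n i) a0)
      = ((n-1).factorial : ℂ) • P α n (Equiv.swap (Fin.castAdd n j) a0 * Equiv.swap (Fin.castAdd n i) a0) := by
    rw [Finset.sum_congr rfl (fun k hk => by
      obtain ⟨hk1, hk2⟩ := Finset.mem_filter.mp hk
      exact P_diag hk1 hk2), Finset.sum_const, card_stab hn ha0,
      ← Nat.cast_smul_eq_nsmul ℂ]
  have diag2 : ∑ k ∈ (Fk α n).filter (fun k => k a0 = a0),
      P α n (Equiv.swap (Fin.castAdd n i) a0 * k * Equiv.swap (Fin.castAdd n j) a0)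
      = ((n-1).factorial : ℂ) • P α n (Equiv.swap (Fin.castAdd n i) a0 * Equiv.swap (Fin.castAdd n j) a0) := by
    rw [Finset.sum_congr rfl (fun k hk => by
      obtain ⟨hk1, hk2⟩ := Finset.mem_filter.mp hk
      exact P_diag hk1 hk2), Finset.sum_const, card_stab hn ha0,
      ← Nat.cast_smul_eq_nsmul ℂ]
  -- off-diagonal parts agree
  have offeq : ∑ k ∈ (Fk α n).filter (fun k => ¬ k a0 = a0),
      P α n (Equiv.swap (Fin.castAdd n j) a0 * k * Equiv.swap (Fin.castAdd n i) a0)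
      = ∑ k ∈ (Fk α n).filter (fun k => ¬ k a0 = a0),
        P α n (Equiv.swap (Fin.castAdd n i) a0 * k * Equiv.swap (Fin.castAdd n j) a0) := by
    rcases Finset.eq_empty_or_nonempty ((Fk α n).filter (fun k => ¬ k a0 = a0)) with he | hne
    · rw [he]
      simp
    · obtain ⟨k0, hk0⟩ := hne
      obtain ⟨hk01, hk02⟩ := Finset.mem_filter.mp hk0
      have hge : α ≤ (k0 a0 : ℕ) := apply_ge hk01 (by omega)
      have hlt := (k0 a0).isLt
      have hne0 : (k0 a0 : ℕ) ≠ α := fun h => hk02 (Fin.ext (by omega))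
      have h2 : α + 1 < α + n := by omega
      set a1 : Fin (α + n) := ⟨α + 1, h2⟩ with ha1
      have ha1v : (a1 : ℕ) = α + 1 := rfl
      calc ∑ k ∈ (Fk α n).filter (fun k => ¬ k a0 = a0),
            P α n (Equiv.swap (Fin.castAdd n j) a0 * k * Equiv.swap (Fin.castAdd n i) a0)
          = ∑ _k ∈ (Fk α n).filter (fun k => ¬ k a0 = a0),
            P α n (Equiv.swap (Fin.castAdd n i) a0 * Equiv.swap (Fin.castAdd n j) a1) := by
            apply Finset.sum_congr rfl
            intro k hk
            obtain ⟨hk1, hk2⟩ := Finset.mem_filter.mp hk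
            exact P_offdiag ha0 ha1v hij hk1 hk2
        _ = ∑ _k ∈ (Fk α n).filter (fun k => ¬ k a0 = a0),
            P α n (Equiv.swap (Fin.castAdd n j) a0 * Equiv.swap (Fin.castAdd n i) a1) := by
            rw [P_offdiag_symm ha0 ha1v hij]
        _ = ∑ k ∈ (Fk α n).filter (fun k => ¬ k a0 = a0),
            P α n (Equiv.swap (Fin.castAdd n i) a0 * k * Equiv.swap (Fin.castAdd n j) a0) := by
            apply Finset.sum_congr rfl
            intro k hk
            obtain ⟨hk1, hk2⟩ := Finset.mem_filter.mp hk
            exact (P_offdiag ha0 ha1v hij.symm hk1 hk2).symm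
  rw [diag1, diag2, offeq, smul_sub]
  abel

/-! ### aElt and the embedded swap -/

lemma unitK_mul_P (t : Perm (Fin (α + n))) : unitK α n * P α n t = P α n t := by
  unfold P
  rw [← mul_assoc, ← mul_assoc, unitK_mul_unitK]

lemma aElt_eq (g : Perm (Fin α)) :
    aElt α n g = single (Perm.viaFintypeEmbedding g (Fin.castAddEmb n)) (1:ℂ) * unitK α n := by
  rw [aElt, unitK_eq, mul_smul_comm, Finset.mul_sum]
  congr 1
  apply Finset.sum_congr rfl
  intro σ _
  rw [MonoidAlgebra.single_mul_single, one_mul]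

lemma via_swap_eq {i j : Fin α} :
    Perm.viaFintypeEmbedding (Equiv.swap i j) (Fin.castAddEmb n)
      = Equiv.swap (Fin.castAdd n i) (Fin.castAdd n j) := by
  have hemb : ∀ y : Fin α, (Fin.castAddEmb n) y = Fin.castAdd n y := fun _ => rfl
  ext x
  by_cases hx : (x : ℕ) < α
  · have hxr : x = (Fin.castAddEmb n) ⟨(x : ℕ), hx⟩ := Fin.ext rfl
    rw [hxr, Equiv.Perm.viaFintypeEmbedding_apply_image]
    set y : Fin α := ⟨(x : ℕ), hx⟩ with hy
    by_cases h1 : y = i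
    · rw [h1, Equiv.swap_apply_left, hemb, hemb, Equiv.swap_apply_left]
    · by_cases h2 : y = j
      · rw [h2, Equiv.swap_apply_right, hemb, hemb, Equiv.swap_apply_right]
      · rw [Equiv.swap_apply_of_ne_of_ne h1 h2, hemb,
          Equiv.swap_apply_of_ne_of_ne
            (fun h => h1 (Fin.ext (by have := congrArg Fin.val h; simpa using this)))
            (fun h => h2 (Fin.ext (by have := congrArg Fin.val h; simpa using this)))]
  · rw [Equiv.Perm.viaFintypeEmbedding_apply_notMem_range _ _
      (by
        rintro ⟨y, rfl⟩
        exact hx y.isLt)]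
    have hvi : ((Fin.castAdd n i : Fin (α + n)) : ℕ) = (i : ℕ) := rfl
    have hvj : ((Fin.castAdd n j : Fin (α + n)) : ℕ) = (j : ℕ) := rfl
    rw [Equiv.swap_apply_of_ne_of_ne
      (fun h => by have hv := congrArg Fin.val h; rw [hvi] at hv; have := i.isLt; omega)
      (fun h => by have hv := congrArg Fin.val h; rw [hvj] at hv; have := j.isLt; omega)]

lemma swap_comm_unitK {i j : Fin α} :
    single (Equiv.swap (Fin.castAdd n i) (Fin.castAdd n j)) (1:ℂ) * unitK α n
      = unitK α n * single (Equiv.swap (Fin.castAdd n i) (Fin.castAdd n j)) (1:ℂ) := by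
  rw [unitK_eq, mul_smul_comm, smul_mul_assoc]
  congr 1
  rw [Finset.mul_sum, Finset.sum_mul]
  apply Finset.sum_congr rfl
  intro σ hσ
  rw [MonoidAlgebra.single_mul_single, MonoidAlgebra.single_mul_single,
    (comm_of_fixed (mem_Fk.mp hσ _ i.isLt) (mem_Fk.mp hσ _ j.isLt)).symm]

lemma single_swap_mul_P {i j : Fin α} (t : Perm (Fin (α + n))) :
    single (Equiv.swap (Fin.castAdd n i) (Fin.castAdd n j)) (1:ℂ) * P α n t
      = P α n (Equiv.swap (Fin.castAdd n i) (Fin.castAdd n j) * t) := by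
  unfold P
  rw [← mul_assoc, ← mul_assoc, swap_comm_unitK, mul_assoc (unitK α n),
    MonoidAlgebra.single_mul_single, one_mul]

lemma swap_conj_left {a0 : Fin (α + n)} (ha0 : (a0 : ℕ) = α) {i j : Fin α} (hij : i ≠ j) :
    Equiv.swap (Fin.castAdd n i) (Fin.castAdd n j) * Equiv.swap (Fin.castAdd n j) a0
      = Equiv.swap (Fin.castAdd n j) a0 * Equiv.swap (Fin.castAdd n i) a0 := by
  have hcicj : Fin.castAdd n i ≠ Fin.castAdd n j := fun h => hij (Fin.ext (by
    have := congrArg Fin.val h; simpa using this))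
  have hcia0 : Fin.castAdd n i ≠ a0 := fun h => by
    have hv := congrArg Fin.val h
    rw [show ((Fin.castAdd n i : Fin (α + n)) : ℕ) = (i : ℕ) from rfl, ha0] at hv
    have := i.isLt; omega
  have h := Equiv.swap_apply_apply (Equiv.swap (Fin.castAdd n j) a0) (Fin.castAdd n i) a0
  rw [Equiv.swap_apply_of_ne_of_ne hcicj hcia0, Equiv.swap_apply_right] at h
  rw [h]
  exact inv_mul_cancel_right _ _

/-! ### Main assembly -/

lemma main (hn : 0 < n) (i j : Fin α) (hij : i ≠ j) :
    theta α n hn j * theta α n hn i - theta α n hn i * theta α n hn j =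
      aElt α n (Equiv.swap i j) * (theta α n hn j - theta α n hn i) := by
  classical
  rw [theta_eq hn i, theta_eq hn j, aElt_eq, via_swap_eq]
  have hne : ((n.factorial : ℂ)) ≠ 0 := by exact_mod_cast n.factorial_ne_zero
  have hfac : ((n.factorial : ℂ)) = (n : ℂ) * ((n-1).factorial : ℂ) := by
    exact_mod_cast (Nat.mul_factorial_pred hn.ne').symm
  set a0 : Fin (α + n) := ⟨α, by omega⟩ with ha0d
  have ha0 : (a0 : ℕ) = α := rfl
  set ti := Equiv.swap (Fin.castAdd n i) a0 with hti
  set tj := Equiv.swap (Fin.castAdd n j) a0 with htj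
  set s := Equiv.swap (Fin.castAdd n i) (Fin.castAdd n j) with hs
  -- LHS
  have lhs_eq : (n:ℂ) • P α n tj * ((n:ℂ) • P α n ti) - (n:ℂ) • P α n ti * ((n:ℂ) • P α n tj)
      = (n:ℂ) • (P α n (tj * ti) - P α n (ti * tj)) := by
    rw [smul_mul_smul_comm, smul_mul_smul_comm, P_mul_P, P_mul_P,
      smul_smul, smul_smul, ← smul_sub, sum_cancel hn ha0 hij, smul_smul]
    congr 1
    have hn0 : (n : ℂ) ≠ 0 := by exact_mod_cast hn.ne'
    have hne2 : ((n-1).factorial : ℂ) ≠ 0 := by exact_mod_cast (n-1).factorial_ne_zero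
    rw [hfac]
    field_simp
  -- RHS
  have rhs_eq : single s (1:ℂ) * unitK α n * ((n:ℂ) • P α n tj - (n:ℂ) • P α n ti)
      = (n:ℂ) • (P α n (tj * ti) - P α n (ti * tj)) := by
    rw [mul_sub, mul_smul_comm, mul_smul_comm, mul_assoc, mul_assoc,
      unitK_mul_P, unitK_mul_P, single_swap_mul_P, single_swap_mul_P,
      ← hs, ← smul_sub]
    congr 2
    · rw [hs, hti, htj]
      exact congrArg (P α n) (swap_conj_left ha0 hij)
    · rw [hs, hti, htj]
      rw [Equiv.swap_comm (Fin.castAdd n i) (Fin.castAdd n j)]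
      exact congrArg (P α n) (swap_conj_left ha0 hij.symm)
  rw [lhs_eq, rhs_eq]

end TC
end TCsec

/-- In `C[S_n\S_{α+n}/S_n]`, for distinct `i, j ≤ α` the commutator
`θ_j·θ_i − θ_i·θ_j` equals `a((i j))·(θ_j − θ_i)`. -/
theorem theta_commutator (α n : ℕ) (hn : 0 < n) (i j : Fin α) (hij : i ≠ j) :
    theta α n hn j * theta α n hn i - theta α n hn i * theta α n hn j =
      aElt α n (Equiv.swap i j) * (theta α n hn j - theta α n hn i) := by
  exact TC.main hn i j hij
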